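/- With Ĥ = ⨁_{n≥1} H, Ĵ = J ⊕ (−I) ⊕ (−I) ⊕ ⋯, and p the projection onto the first coordinate: if L is a nontrivial positive subspace of (Ĥ, Ĵ), then pL is a nontrivial positive subspace of (H, J). -/

import Mathlib

/-- with `Ĥ = ⨁_{n≥1} H`, `Ĵ = J ⊕ (-I) ⊕ ⋯` and `p` the first-coordinate
projection, the image under `p` of a nontrivial positive subspace of `(Ĥ, Ĵ)` is a
nontrivial positive subspace of `(H, J)`. -/
theorem image_of_nontrivial_positive_subspace {H : Type*} [NormedAddCommGroup H]
    [InnerProductSpace ℂ H] [CompleteSpace H]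
    (J : H →L[ℂ] H) (hJ : IsSelfAdjoint J) (hJ2 : J ∘L J = 1)
    (Jhat : lp (fun _ : ℕ => H) 2 →L[ℂ] lp (fun _ : ℕ => H) 2)
    (hJhat0 : ∀ f : lp (fun _ : ℕ => H) 2, (Jhat f) 0 = J (f 0))
    (hJhatn : ∀ (f : lp (fun _ : ℕ => H) 2) (n : ℕ), n ≠ 0 → (Jhat f) n = -(f n))
    (p : lp (fun _ : ℕ => H) 2 →L[ℂ] H)
    (hp : ∀ f : lp (fun _ : ℕ => H) 2, p f = f 0)
    (L : Submodule ℂ (lp (fun _ : ℕ => H) 2))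
    (hLpos : ∀ x ∈ L, 0 ≤ (inner ℂ x (Jhat x) : ℂ).re)
    (hLne : L ≠ ⊥) :
    (∀ y ∈ L.map p.toLinearMap, 0 ≤ (inner ℂ y (J y) : ℂ).re) ∧ L.map p.toLinearMap ≠ ⊥ := by
  -- key decomposition
  have key : ∀ x : lp (fun _ : ℕ => H) 2,
      (inner ℂ x (Jhat x) : ℂ).re
        = (inner ℂ (x 0) (J (x 0)) : ℂ).re - ∑' n : ℕ, ‖x (n + 1)‖ ^ 2 := by
    intro x
    have hsum : Summable fun n : ℕ => (inner ℂ (x n) ((Jhat x) n) : ℂ) :=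
      lp.summable_inner x (Jhat x)
    have hdef : (inner ℂ x (Jhat x) : ℂ) = ∑' n : ℕ, (inner ℂ (x n) ((Jhat x) n) : ℂ) :=
      lp.inner_eq_tsum x (Jhat x)
    have hre : (inner ℂ x (Jhat x) : ℂ).re
        = ∑' n : ℕ, (inner ℂ (x n) ((Jhat x) n) : ℂ).re := by
      rw [hdef, Complex.re_tsum hsum]
    have hsre : Summable fun n : ℕ => (inner ℂ (x n) ((Jhat x) n) : ℂ).re :=
      Complex.reCLM.summable hsum
    have hsplit : (∑' n : ℕ, (inner ℂ (x n) ((Jhat x) n) : ℂ).re)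
        = (inner ℂ (x 0) ((Jhat x) 0) : ℂ).re
          + ∑' n : ℕ, (inner ℂ (x (n + 1)) ((Jhat x) (n + 1)) : ℂ).re :=
      hsre.tsum_eq_zero_add
    have hterm : ∀ n : ℕ, (inner ℂ (x (n + 1)) ((Jhat x) (n + 1)) : ℂ).re
        = -(‖x (n + 1)‖ ^ 2) := by
      intro n
      rw [hJhatn x (n + 1) (Nat.succ_ne_zero n), inner_neg_right]
      rw [@inner_self_eq_norm_sq_to_K ℂ]
      simp
      norm_cast
    rw [hre, hsplit, hJhat0 x]
    rw [tsum_congr hterm, tsum_neg]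
    ring
  have hsum_sq : ∀ x : lp (fun _ : ℕ => H) 2,
      Summable fun n : ℕ => ‖x (n + 1)‖ ^ 2 := by
    intro x
    have hsum : Summable fun n : ℕ => (inner ℂ (x n) ((Jhat x) n) : ℂ) :=
      lp.summable_inner x (Jhat x)
    have hsre : Summable fun n : ℕ => (inner ℂ (x n) ((Jhat x) n) : ℂ).re :=
      Complex.reCLM.summable hsum
    have := (hsre.comp_injective (add_left_injective 1)).neg
    refine this.congr fun n => ?_
    simp only [Function.comp]
    rw [hJhatn x (n + 1) (Nat.succ_ne_zero n), inner_neg_right]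
    rw [@inner_self_eq_norm_sq_to_K ℂ]
    simp
    norm_cast
  constructor
  · rintro y ⟨x, hxL, rfl⟩
    rw [ContinuousLinearMap.coe_coe, hp]
    have h1 := hLpos x hxL
    have h2 := key x
    have h3 : 0 ≤ ∑' n : ℕ, ‖x (n + 1)‖ ^ 2 :=
      tsum_nonneg fun n => sq_nonneg _
    linarith
  · intro hbot
    obtain ⟨x, hxL, hx0⟩ := Submodule.exists_mem_ne_zero_of_ne_bot hLne
    have hpx : p x = 0 := by
      have : p x ∈ L.map p.toLinearMap := ⟨x, hxL, rfl⟩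
      simpa [hbot] using this
    have hx00 : x 0 = 0 := by rw [hp] at hpx; exact hpx
    have h1 := hLpos x hxL
    have h2 := key x
    rw [hx00] at h2
    simp only [map_zero, inner_zero_right, Complex.zero_re, zero_sub] at h2
    have h3 : (∑' n : ℕ, ‖x (n + 1)‖ ^ 2) = 0 := by
      have h4 : 0 ≤ ∑' n : ℕ, ‖x (n + 1)‖ ^ 2 := tsum_nonneg fun n => sq_nonneg _
      linarith
    have h5 : ∀ n : ℕ, ‖x (n + 1)‖ ^ 2 = 0 := fun n =>
      le_antisymm (h3 ▸ (hsum_sq x).le_tsum n fun m _ => sq_nonneg _) (sq_nonneg _)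
    apply hx0
    ext n
    cases n with
    | zero => simpa using hx00
    | succ n =>
      have := h5 n
      have : ‖x (n + 1)‖ = 0 := by nlinarith [norm_nonneg (x (n+1))]
      simpa using norm_eq_zero.mp this
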